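/- In the two-interval price-taker model, the optimal profit equals P̄·max(0, λ_1·η² − λ_2, λ_2·η² − λ_1) up to ordering: precisely, the maximum of λ_1(p_1−b_1)+λ_2(p_2−b_2) over feasible schedules equals P̄·max{0, η²λ_1 − λ_2, η²λ_2 − λ_1}. -/

import Mathlib

/-- Feasibility for the two-interval storage model. -/
def Feas2 (η Pm p1 b1 p2 b2 : ℝ) : Prop :=
  0 ≤ p1 ∧ p1 ≤ Pm ∧ 0 ≤ b1 ∧ b1 ≤ Pm ∧
  0 ≤ p2 ∧ p2 ≤ Pm ∧ 0 ≤ b2 ∧ b2 ≤ Pm ∧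
  (p1 + p2) / η = (b1 + b2) * η

/-- the optimal two-interval price-taker profit equals
`P̄ · max {0, η²λ₁ − λ₂, η²λ₂ − λ₁}`. -/
theorem taker_two_interval_optimal_value
    (η Pm l1 l2 : ℝ) (hη : 0 < η) (hη1 : η < 1) (hPm : 0 < Pm)
    (hl1 : 0 ≤ l1) (hl2 : 0 ≤ l2) :
    IsGreatest {x : ℝ | ∃ p1 b1 p2 b2, Feas2 η Pm p1 b1 p2 b2 ∧
        x = l1 * (p1 - b1) + l2 * (p2 - b2)}
      (Pm * max 0 (max (η ^ 2 * l1 - l2) (η ^ 2 * l2 - l1))) := by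
  have hη2 : η ^ 2 < 1 := by nlinarith
  have hη2pos : 0 < η ^ 2 := by positivity
  constructor
  · -- membership
    rcases le_total (η ^ 2 * l1 - l2) (η ^ 2 * l2 - l1) with h | h
    · rw [max_comm (η ^ 2 * l1 - l2), max_eq_left h]
      rcases le_total (η ^ 2 * l2 - l1) 0 with h0 | h0
      · rw [max_eq_left h0]
        exact ⟨0, 0, 0, 0, ⟨le_refl 0, hPm.le, le_refl 0, hPm.le, le_refl 0, hPm.le,
          le_refl 0, hPm.le, by field_simp; ring⟩, by ring⟩
      · rw [max_eq_right h0]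
        refine ⟨0, Pm, η ^ 2 * Pm, 0, ⟨le_refl 0, hPm.le, hPm.le, le_refl Pm,
          by positivity, by nlinarith, le_refl 0, hPm.le, ?_⟩, by ring⟩
        field_simp
        ring
    · rw [max_eq_left h]
      rcases le_total (η ^ 2 * l1 - l2) 0 with h0 | h0
      · rw [max_eq_left h0]
        exact ⟨0, 0, 0, 0, ⟨le_refl 0, hPm.le, le_refl 0, hPm.le, le_refl 0, hPm.le,
          le_refl 0, hPm.le, by field_simp; ring⟩, by ring⟩
      · rw [max_eq_right h0]
        refine ⟨η ^ 2 * Pm, 0, 0, Pm, ⟨by positivity, by nlinarith, le_refl 0, hPm.le,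
          le_refl 0, hPm.le, hPm.le, le_refl Pm, ?_⟩, by ring⟩
        field_simp
        ring
  · -- upper bound
    rintro x ⟨p1, b1, p2, b2, ⟨hp1, hp1', hb1, hb1', hp2, hp2', hb2, hb2', hc⟩, rfl⟩
    have heq : p1 + p2 = (b1 + b2) * η ^ 2 := by
      field_simp at hc
      nlinarith [hc]
    set M := max 0 (max (η ^ 2 * l1 - l2) (η ^ 2 * l2 - l1)) with hM
    have hM0 : 0 ≤ M := le_max_left _ _
    have hM1 : η ^ 2 * l1 - l2 ≤ M := le_trans (le_max_left _ _) (le_max_right _ _)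
    have hM2 : η ^ 2 * l2 - l1 ≤ M := le_trans (le_max_right _ _) (le_max_right _ _)
    rcases le_total l2 l1 with hle | hle
    · nlinarith [mul_nonneg (sub_nonneg.2 hM1) hb2, mul_nonneg hM0 (sub_nonneg.2 hb2'),
        mul_nonneg (mul_nonneg (sub_nonneg.2 hη2.le) hl1) hb1,
        mul_nonneg (sub_nonneg.2 hle) hp2,
        mul_nonneg hl1 (sub_nonneg.2 (le_of_eq heq))]
    · nlinarith [mul_nonneg (sub_nonneg.2 hM2) hb1, mul_nonneg hM0 (sub_nonneg.2 hb1'),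
        mul_nonneg (mul_nonneg (sub_nonneg.2 hη2.le) hl2) hb2,
        mul_nonneg (sub_nonneg.2 hle) hp1,
        mul_nonneg hl2 (sub_nonneg.2 (le_of_eq heq))]
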